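/- Every non-precompact abelian topological group G contains a uniformly discrete sequence: there exist points (g_n)_{n∈ℕ} in G and a symmetric open neighborhood W of 0 such that 0 ∉ g_k + W + W + W + W for every k, and g_k − g_n ∉ W + W + W + W for all distinct k, n. -/

import Mathlib

open Filter Topology Pointwise

noncomputable def seqL {G : Type*} [AddCommGroup G] (V : Set G)
    (h : ∀ s : Set G, s.Finite → ∃ x, x ∉ s + V) : ℕ → List G
  | 0 => [0]
  | n+1 => (h {y | y ∈ seqL V h n} (List.finite_toSet _)).choose :: seqL V h n

lemma seqL_ne_nil {G : Type*} [AddCommGroup G] (V : Set G)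
    (h : ∀ s : Set G, s.Finite → ∃ x, x ∉ s + V) (n : ℕ) : seqL V h n ≠ [] := by
  cases n <;> simp [seqL]

noncomputable def seqG {G : Type*} [AddCommGroup G] (V : Set G)
    (h : ∀ s : Set G, s.Finite → ∃ x, x ∉ s + V) (n : ℕ) : G :=
  (seqL V h (n+1)).head (seqL_ne_nil V h _)

lemma seqG_not_mem {G : Type*} [AddCommGroup G] (V : Set G)
    (h : ∀ s : Set G, s.Finite → ∃ x, x ∉ s + V) (n : ℕ) :
    seqG V h n ∉ {y | y ∈ seqL V h n} + V := by
  have : seqG V h n = (h {y | y ∈ seqL V h n} (List.finite_toSet _)).choose := rfl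
  rw [this]
  exact (h {y | y ∈ seqL V h n} (List.finite_toSet _)).choose_spec

lemma seqL_mono {G : Type*} [AddCommGroup G] (V : Set G)
    (h : ∀ s : Set G, s.Finite → ∃ x, x ∉ s + V) {m n : ℕ} (hmn : m ≤ n) :
    ∀ x ∈ seqL V h m, x ∈ seqL V h n := by
  induction hmn with
  | refl => exact fun x hx => hx
  | step _ ih => exact fun x hx => by simpa [seqL] using Or.inr (ih x hx)

lemma zero_mem_seqL {G : Type*} [AddCommGroup G] (V : Set G)
    (h : ∀ s : Set G, s.Finite → ∃ x, x ∉ s + V) (n : ℕ) : (0 : G) ∈ seqL V h n :=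
  seqL_mono V h (Nat.zero_le n) 0 (by simp [seqL])

lemma seqG_mem_seqL {G : Type*} [AddCommGroup G] (V : Set G)
    (h : ∀ s : Set G, s.Finite → ∃ x, x ∉ s + V) {m n : ℕ} (hmn : m < n) :
    seqG V h m ∈ seqL V h n :=
  seqL_mono V h hmn (seqG V h m) (List.head_mem _)

lemma seqG_sub_not_mem {G : Type*} [AddCommGroup G] (V : Set G)
    (h : ∀ s : Set G, s.Finite → ∃ x, x ∉ s + V) {m n : ℕ} (hmn : m < n) :
    seqG V h n - seqG V h m ∉ V := by
  intro hv
  exact seqG_not_mem V h n ⟨seqG V h m, seqG_mem_seqL V h hmn,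
    seqG V h n - seqG V h m, hv,
    by show seqG V h m + (seqG V h n - seqG V h m) = seqG V h n; abel⟩

lemma seqG_not_mem_V {G : Type*} [AddCommGroup G] (V : Set G)
    (h : ∀ s : Set G, s.Finite → ∃ x, x ∉ s + V) (n : ℕ) : seqG V h n ∉ V := by
  intro hv
  exact seqG_not_mem V h n ⟨0, zero_mem_seqL V h n, seqG V h n, hv,
    by show (0 : G) + seqG V h n = seqG V h n; abel⟩

/-- Every non-precompact abelian topological group contains a uniformly discrete sequence:
there exist `(gₙ)` and a symmetric open neighborhood `W` of `0` with `0 ∉ gₖ + W + W + W + W`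
for all `k` and `gₖ - gₙ ∉ W + W + W + W` for all `k ≠ n`. -/
theorem stmt19 {G : Type*} [AddCommGroup G] [TopologicalSpace G] [IsTopologicalAddGroup G]
    (hG : ¬ ∀ V ∈ 𝓝 (0 : G), ∃ F : Set G, F.Finite ∧ (Set.univ : Set G) ⊆ F + V) :
    ∃ (g : ℕ → G) (W : Set G), IsOpen W ∧ (0 : G) ∈ W ∧ W = -W ∧
      (∀ k, (0 : G) ∉ {g k} + W + W + W + W) ∧
      ∀ k n, k ≠ n → g k - g n ∉ W + W + W + W := by
  push_neg at hG
  obtain ⟨V, hV, hVcov⟩ := hG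
  have h : ∀ s : Set G, s.Finite → ∃ x, x ∉ s + V := by
    intro s hs
    by_contra h'
    push_neg at h'
    exact hVcov s hs (fun x _ => h' x)
  obtain ⟨U, hU, hU4⟩ := exists_nhds_zero_quarter hV
  set W : Set G := interior U ∩ -interior U with hWdef
  have hWopen : IsOpen W := (isOpen_interior).inter (isOpen_interior.neg)
  have hW0 : (0 : G) ∈ W := by
    constructor
    · exact mem_interior_iff_mem_nhds.2 hU
    · simpa using mem_interior_iff_mem_nhds.2 hU
  have hWsymm : W = -W := by
    ext x
    simp only [hWdef, Set.mem_inter_iff, Set.mem_neg, neg_neg]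
    tauto
  have hWU : W ⊆ U := fun x hx => interior_subset hx.1
  set W4 : Set G := W + W + W + W with hW4def
  have hW4 : W4 ⊆ V := by
    rintro x ⟨_, ⟨_, ⟨a, ha, b, hb, rfl⟩, c, hc, rfl⟩, d, hd, rfl⟩
    exact hU4 (hWU ha) (hWU hb) (hWU hc) (hWU hd)
  have hnegW4 : -W4 = W4 := by
    rw [hW4def, neg_add_rev, neg_add_rev, neg_add_rev, ← hWsymm]
    abel
  have hW4neg : ∀ x ∈ W4, -x ∈ W4 := by
    intro x hx
    rw [← hnegW4]
    exact Set.neg_mem_neg.mpr hx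
  refine ⟨seqG V h, W, hWopen, hW0, hWsymm, ?_, ?_⟩
  · intro k hk
    have hre : {seqG V h k} + W + W + W + W = {seqG V h k} + W4 := by
      rw [hW4def]; simp only [add_assoc]
    rw [hre] at hk
    rcases hk with ⟨a, ha, w, hw, hsum⟩
    have ha' : a = seqG V h k := ha
    have hsum' : a + w = 0 := hsum
    have : seqG V h k = -w := by rw [← ha']; exact eq_neg_of_add_eq_zero_left hsum'
    exact seqG_not_mem_V V h k (hW4 (this ▸ hW4neg w hw))
  · intro k n hkn hmem
    rcases lt_or_gt_of_ne hkn with hlt | hlt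
    · have : -(seqG V h k - seqG V h n) ∈ W4 := hW4neg _ hmem
      rw [neg_sub] at this
      exact seqG_sub_not_mem V h hlt (hW4 this)
    · exact seqG_sub_not_mem V h hlt (hW4 hmem)
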